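/- Let d ≥ 1, M ≥ 2, let p, p_1, …, p_M ∈ ℝ^d with p ≠ p_m for all m, and let c > 0. Define τ_m = ‖p − p_m‖₂/c, the delay-gradient vectors g_i ∈ ℝ^M by [g_i]_m = (p_i − [p_m]_i)/(c‖p − p_m‖₂), the centering projection P = I_M − (1/M)𝟙𝟙ᵀ, the geometry matrix G ∈ ℝ^{d×d} by G_{ij} = (P g_i)ᵀ(P g_j), and for f ∈ ℝ the steering vector v(f) ∈ ℂ^M with [v(f)]_m = exp(−2πℹ f τ_m). Fix 0 < f_L, S_L > 0, N₀ > 0, and a water level λ with 0 < λ < S_L + N₀. Set B_L = 1 − λ/(S_L + N₀), S_{w,L} = B_L² N₀ + λ B_L, γ_L = S_L B_L²/S_{w,L}, w_L = 2Mγ_L²/(1 + Mγ_L), and for |f| ≤ f_L let S(f) = S_L B_L² v(f)v(f)* + S_{w,L} I_M and S'_i(f) = 2πℹ f S_L B_L² (v(f)v(f)* D_i − D_i v(f)v(f)*), where D_i = diag(g_i). Then for all 1 ≤ i, j ≤ d: (1/2)∫_{−f_L}^{f_L} tr(S(f)^{-1} S'_i(f) S(f)^{-1} S'_j(f)) df =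 (4π²/3)·f_L³·w_L·G_{ij}. -/

import Mathlib

open Matrix Real

set_option linter.unusedSectionVars false
set_option maxHeartbeats 1000000

section Helpers
variable {n : Type*} [Fintype n] [DecidableEq n] {R : Type*} [CommRing R]

lemma vmv_mul_diag (a b d : n → R) :
    vecMulVec a b * diagonal d = vecMulVec a (fun m => b m * d m) := by
  ext i j
  simp [mul_apply, vecMulVec_apply, diagonal, Finset.sum_ite_eq, mul_assoc]

lemma diag_mul_vmv (a b d : n → R) :
    diagonal d * vecMulVec a b = vecMulVec (fun m => d m * a m) b := by
  ext i j
  simp [mul_apply, vecMulVec_apply, diagonal, mul_assoc]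

lemma vmv_mul_vmv (a b c e : n → R) :
    vecMulVec a b * vecMulVec c e = (b ⬝ᵥ c) • vecMulVec a e := by
  ext i j
  simp [mul_apply, vecMulVec_apply, dotProduct, Finset.sum_mul, Finset.mul_sum]
  apply Finset.sum_congr rfl; intros; ring

lemma trace_vmv (a b : n → R) : trace (vecMulVec a b) = a ⬝ᵥ b := by
  simp [trace, vecMulVec_apply, dotProduct, diag]

lemma key_trace {M : ℕ} (u : Fin M → ℂ) (hu : ∀ m, u m * star (u m) = 1)
    (gi gj : Fin M → ℂ) (a b κi κj : ℂ) (hb : b ≠ 0) (hab : b + a * M ≠ 0) :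
    trace ((a • vecMulVec u (star u) + b • 1)⁻¹ *
      (κi • (vecMulVec u (star u) * diagonal gi - diagonal gi * vecMulVec u (star u))) *
      (a • vecMulVec u (star u) + b • 1)⁻¹ *
      (κj • (vecMulVec u (star u) * diagonal gj - diagonal gj * vecMulVec u (star u))))
    = κi * κj * (2 * b⁻¹ * b⁻¹ * (1 - a / (b + a * M) * M)) *
        ((∑ m, gi m) * (∑ m, gj m) - M * ∑ m, gi m * gj m) := by
  have hu' : ∀ m, u m * (starRingEnd ℂ) (u m) = 1 := fun m => hu m
  have A3 : star u ⬝ᵥ u = (M : ℂ) := by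
    simp only [dotProduct, Pi.star_apply, Complex.star_def]
    rw [Finset.sum_congr rfl (fun m _ => show (starRingEnd ℂ) (u m) * u m = 1 by
      linear_combination hu' m)]
    simp
  have A4 : u ⬝ᵥ star u = (M : ℂ) := by
    simp only [dotProduct, Pi.star_apply, Complex.star_def]
    rw [Finset.sum_congr rfl (fun m _ => hu' m)]
    simp
  have A1 : ∀ h : Fin M → ℂ, (fun m => star u m * h m) ⬝ᵥ u = ∑ m, h m := by
    intro h
    simp only [dotProduct, Pi.star_apply, Complex.star_def]
    exact Finset.sum_congr rfl (fun m _ => by linear_combination h m * hu' m)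
  have A2 : ∀ h : Fin M → ℂ, u ⬝ᵥ (fun m => star u m * h m) = ∑ m, h m := by
    intro h
    simp only [dotProduct, Pi.star_apply, Complex.star_def]
    exact Finset.sum_congr rfl (fun m _ => by linear_combination h m * hu' m)
  have A5 : ∀ h : Fin M → ℂ, star u ⬝ᵥ (fun m => h m * u m) = ∑ m, h m := by
    intro h
    simp only [dotProduct, Pi.star_apply, Complex.star_def]
    exact Finset.sum_congr rfl (fun m _ => by linear_combination h m * hu' m)
  have A8 : ∀ h : Fin M → ℂ, (fun m => h m * u m) ⬝ᵥ star u = ∑ m, h m := by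
    intro h
    simp only [dotProduct, Pi.star_apply, Complex.star_def]
    exact Finset.sum_congr rfl (fun m _ => by linear_combination h m * hu' m)
  have A6 : ∀ h h' : Fin M → ℂ,
      (fun m => h m * u m) ⬝ᵥ (fun m => star u m * h' m) = ∑ m, h m * h' m := by
    intro h h'
    simp only [dotProduct, Pi.star_apply, Complex.star_def]
    exact Finset.sum_congr rfl (fun m _ => by linear_combination h m * h' m * hu' m)
  have A7 : ∀ h h' : Fin M → ℂ,
      (fun m => star u m * h m) ⬝ᵥ (fun m => h' m * u m) = ∑ m, h m * h' m := by
    intro h h'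
    simp only [dotProduct, Pi.star_apply, Complex.star_def]
    exact Finset.sum_congr rfl (fun m _ => by linear_combination h m * h' m * hu' m)
  have hVV : vecMulVec u (star u) * vecMulVec u (star u) = (M : ℂ) • vecMulVec u (star u) := by
    rw [vmv_mul_vmv, A3]
  have hinv : (a • vecMulVec u (star u) + b • 1)⁻¹
      = b⁻¹ • ((1 : Matrix (Fin M) (Fin M) ℂ) - (a / (b + a * M)) • vecMulVec u (star u)) := by
    apply Matrix.inv_eq_right_inv
    rw [add_mul, Matrix.smul_mul, Matrix.smul_mul, Matrix.mul_smul, Matrix.mul_smul,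
      mul_sub, mul_sub, Matrix.mul_smul, Matrix.mul_smul, hVV, mul_one, one_mul]
    simp only [one_mul]
    match_scalars
    · field_simp
      ring
    · field_simp
  rw [hinv]
  simp only [Matrix.smul_mul, Matrix.mul_smul, sub_mul, mul_sub, Matrix.mul_assoc, one_mul,
    mul_one, vmv_mul_diag, diag_mul_vmv, vmv_mul_vmv, smul_sub, smul_smul,
    trace_smul, trace_sub, trace_add, trace_vmv, smul_eq_mul]
  rw [A1, A2, A3, A4, A5, A5, A6, A7, A8]
  ring

end Helpers

theorem low_band_whittle_FI_rate
    (d M : ℕ) (hd : 1 ≤ d) (hM : 2 ≤ M)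
    (p : EuclideanSpace ℝ (Fin d)) (ps : Fin M → EuclideanSpace ℝ (Fin d))
    (hps : ∀ m, p ≠ ps m) (c : ℝ) (hc : 0 < c)
    (τ : Fin M → ℝ) (hτ : ∀ m, τ m = ‖p - ps m‖ / c)
    (g : Fin d → Fin M → ℝ)
    (hg : ∀ i m, g i m = (p i - ps m i) / (c * ‖p - ps m‖))
    (P : Matrix (Fin M) (Fin M) ℝ)
    (hP : P = (1 : Matrix (Fin M) (Fin M) ℝ) - ((M : ℝ))⁻¹ • vecMulVec 1 1)
    (G : Fin d → Fin d → ℝ)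
    (hG : ∀ i j, G i j = P.mulVec (g i) ⬝ᵥ P.mulVec (g j))
    (v : ℝ → Fin M → ℂ)
    (hv : ∀ f m, v f m = Complex.exp (-(2 * π * Complex.I * f * τ m)))
    (fL SL N0 lam : ℝ)
    (hfL : 0 < fL) (hSL : 0 < SL) (hN0 : 0 < N0)
    (hlam0 : 0 < lam) (hlamL : lam < SL + N0)
    (BL : ℝ) (hBL : BL = 1 - lam / (SL + N0))
    (SwL : ℝ) (hSwL : SwL = BL ^ 2 * N0 + lam * BL)
    (γL : ℝ) (hγL : γL = SL * BL ^ 2 / SwL)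
    (wL : ℝ) (hwL : wL = 2 * M * γL ^ 2 / (1 + M * γL))
    (D : Fin d → Matrix (Fin M) (Fin M) ℂ)
    (hD : ∀ i, D i = Matrix.diagonal fun m => (g i m : ℂ))
    (S : ℝ → Matrix (Fin M) (Fin M) ℂ)
    (S' : Fin d → ℝ → Matrix (Fin M) (Fin M) ℂ)
    (hSlow : ∀ f : ℝ, |f| ≤ fL →
      S f = ((SL * BL ^ 2 : ℝ) : ℂ) • vecMulVec (v f) (star (v f))
        + ((SwL : ℝ) : ℂ) • (1 : Matrix (Fin M) (Fin M) ℂ))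
    (hS'low : ∀ (i : Fin d) (f : ℝ), |f| ≤ fL →
      S' i f = (2 * π * Complex.I * f * (SL * BL ^ 2)) •
        (vecMulVec (v f) (star (v f)) * D i - D i * vecMulVec (v f) (star (v f)))) :
    ∀ i j : Fin d,
      (1 / 2 : ℂ) * ∫ f in (-fL)..fL,
          Matrix.trace ((S f)⁻¹ * S' i f * (S f)⁻¹ * S' j f)
        = (((4 * π ^ 2 / 3) * fL ^ 3 * wL * G i j : ℝ) : ℂ) := by
  intro i j
  -- positivity facts
  have hSN : 0 < SL + N0 := by linarith
  have hBL0 : 0 < BL := by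
    rw [hBL]
    have : lam / (SL + N0) < 1 := (div_lt_one hSN).mpr hlamL
    linarith
  have hb0 : 0 < SwL := by
    rw [hSwL]; positivity
  have ha0 : 0 < SL * BL ^ 2 := by positivity
  have hM0 : (M : ℝ) ≠ 0 := by positivity
  have hab0 : 0 < SwL + SL * BL ^ 2 * M := by positivity
  have hγ0 : 0 < γL := by rw [hγL]; positivity
  have h1γ : (1 : ℝ) + M * γL ≠ 0 := by positivity
  -- G in terms of sums
  have hPg : ∀ i₀, P.mulVec (g i₀) = fun m => g i₀ m - (↑M)⁻¹ * ∑ k, g i₀ k := by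
    intro i₀; funext m
    rw [hP, Matrix.sub_mulVec, Matrix.smul_mulVec, Matrix.one_mulVec]
    simp only [Pi.sub_apply, Pi.smul_apply, smul_eq_mul, mulVec, dotProduct,
      vecMulVec_apply, Pi.one_apply, one_mul]
  have hGe : G i j = (∑ m, g i m * g j m) - (↑M)⁻¹ * ((∑ m, g i m) * (∑ m, g j m)) := by
    rw [hG i j, hPg i, hPg j]
    simp only [dotProduct, sub_mul, mul_sub, Finset.sum_sub_distrib,
      Finset.sum_const, Finset.card_univ, Fintype.card_fin, smul_eq_mul,
      ← Finset.sum_mul, ← Finset.mul_sum]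
    field_simp
    have hM2 : (M:ℝ) ^ 2 * ((M:ℝ)⁻¹) ^ 2 = 1 := by field_simp
    linear_combination ((∑ k, g i k) * ∑ k, g j k) * hM2
  -- real-valued pointwise identity
  have key_real : ∀ f : ℝ,
      (-(4 * π ^ 2 * f ^ 2 * (SL * BL ^ 2) ^ 2)) *
          (2 * SwL⁻¹ * SwL⁻¹ * (1 - SL * BL ^ 2 / (SwL + SL * BL ^ 2 * M) * M)) *
          ((∑ m, g i m) * (∑ m, g j m) - M * ∑ m, g i m * g j m)
        = 4 * π ^ 2 * wL * G i j * f ^ 2 := by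
    intro f
    rw [hwL, hγL, hGe]
    field_simp
    ring
  -- pointwise trace computation
  have hpt : ∀ f ∈ Set.uIcc (-fL) fL,
      Matrix.trace ((S f)⁻¹ * S' i f * (S f)⁻¹ * S' j f)
        = ((4 * π ^ 2 * wL * G i j * f ^ 2 : ℝ) : ℂ) := by
    intro f hf
    have hfabs : |f| ≤ fL := by
      rw [Set.uIcc_of_le (by linarith : -fL ≤ fL)] at hf
      exact abs_le.mpr ⟨hf.1, hf.2⟩
    have hu : ∀ m, v f m * star (v f m) = 1 := by
      intro m
      rw [hv]
      rw [show star (Complex.exp (-(2 * ↑π * Complex.I * ↑f * ↑(τ m))))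
          = Complex.exp (2 * ↑π * Complex.I * ↑f * ↑(τ m)) by
        rw [Complex.star_def, ← Complex.exp_conj]
        congr 1
        simp only [map_neg, _root_.map_mul, Complex.conj_ofReal, Complex.conj_I, map_ofNat]
        ring]
      rw [← Complex.exp_add]
      simp
    have hbC : ((SwL : ℝ) : ℂ) ≠ 0 := by
      exact_mod_cast hb0.ne'
    have habC : ((SwL : ℝ) : ℂ) + ((SL * BL ^ 2 : ℝ) : ℂ) * (M : ℂ) ≠ 0 := by
      have : ((SwL + SL * BL ^ 2 * M : ℝ) : ℂ) ≠ 0 := by exact_mod_cast hab0.ne'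
      push_cast at this ⊢
      convert this using 2
    rw [hSlow f hfabs, hS'low i f hfabs, hS'low j f hfabs, hD i, hD j]
    rw [key_trace (v f) hu _ _ _ _ _ _ hbC habC]
    rw [show (2 * ↑π * Complex.I * ↑f * (↑SL * ↑BL ^ 2)) * (2 * ↑π * Complex.I * ↑f * (↑SL * ↑BL ^ 2))
        = ((-(4 * π ^ 2 * f ^ 2 * (SL * BL ^ 2) ^ 2) : ℝ) : ℂ) by
      push_cast
      linear_combination (4 * (π:ℂ) ^ 2 * (f:ℂ) ^ 2 * ((SL:ℂ) * (BL:ℂ) ^ 2) ^ 2) * Complex.I_sq]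
    rw [← key_real f]
    push_cast
    ring
  rw [intervalIntegral.integral_congr hpt]
  rw [show (fun f : ℝ => ((4 * π ^ 2 * wL * G i j * f ^ 2 : ℝ) : ℂ))
      = fun f : ℝ => (((fun x : ℝ => 4 * π ^ 2 * wL * G i j * x ^ 2) f : ℝ) : ℂ) from rfl]
  rw [intervalIntegral.integral_ofReal]
  rw [intervalIntegral.integral_const_mul, integral_pow]
  push_cast
  ring
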